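/- Every optimal solution of the LP relaxation of formulation (P2) automatically satisfies the ordering constraints on z: if (y, z) ∈ F(P2) and f(y, z) = v(P2), then z^k ≥ z^{k+1} for every k ∈ {1, …, K−1}. -/

import Mathlib

open Finset
open scoped Classical

noncomputable section

/-- Radius of a nonempty set `S` of open facilities: the largest, over clients `i`,
of the distance from `i` to the closest facility in `S`. -/
def radius {N M : ℕ} (hN : 0 < N) (d : Fin N → Fin M → ℝ)
    (S : Finset (Fin M)) (hS : S.Nonempty) : ℝ :=
  (univ : Finset (Fin N)).sup' ⟨⟨0, hN⟩, mem_univ _⟩ fun i => S.inf' hS fun j => d i j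

/-- Optimal radius of the `p`-center problem. -/
def opt {N M : ℕ} (hN : 0 < N) (d : Fin N → Fin M → ℝ) (p : ℕ) : ℝ :=
  sInf { r | ∃ S : Finset (Fin M), ∃ hS : S.Nonempty, S.card ≤ p ∧ r = radius hN d S hS }

/-- Objective function `f(y, z) = D^0 + ∑_{k=1}^K (D^k - D^{k-1}) z^k`
(`z` is 0-indexed: entry `k : Fin K` stands for the paper's `z^{k+1}`). -/
def obj {K : ℕ} (D : Fin (K + 1) → ℝ) (z : Fin K → ℝ) : ℝ :=
  D 0 + ∑ k : Fin K, (D k.succ - D k.castSucc) * z k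

/-- Ordering constraints `z^k ≥ z^{k+1}`, `k ∈ {1, …, K-1}` (0-indexed `z`). -/
def Ordered {K : ℕ} (z : Fin K → ℝ) : Prop :=
  ∀ k : Fin K, ∀ h : (k : ℕ) + 1 < K, z ⟨(k : ℕ) + 1, h⟩ ≤ z k

/-- `ActiveIdx d D i k` says that the paper index `κ = k+1` belongs to `S_i ∪ {K}`:
either `κ ≤ K - 1` and some facility `j` satisfies `d i j = D^κ`, or `κ = K`. -/
def ActiveIdx {N M K : ℕ} (d : Fin N → Fin M → ℝ) (D : Fin (K + 1) → ℝ)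
    (i : Fin N) (k : Fin K) : Prop :=
  ((k : ℕ) + 1 < K ∧ ∃ j, d i j = D k.succ) ∨ (k : ℕ) + 1 = K

/-- LP-relaxed feasible set of formulation `(P2)`. -/
def FP2 {N M K : ℕ} (d : Fin N → Fin M → ℝ) (D : Fin (K + 1) → ℝ) (p : ℕ) :
    Set ((Fin M → ℝ) × (Fin K → ℝ)) :=
  { yz | (∀ j, 0 ≤ yz.1 j ∧ yz.1 j ≤ 1) ∧ (∀ k, 0 ≤ yz.2 k ∧ yz.2 k ≤ 1) ∧
    1 ≤ ∑ j, yz.1 j ∧ ∑ j, yz.1 j ≤ (p : ℝ) ∧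
    ∀ i : Fin N, ∀ k : Fin K,
      1 ≤ yz.2 k + ∑ j ∈ univ.filter (fun j => d i j < D k.succ), yz.1 j }

/-- LP-relaxed feasible set of formulation `(CP1)`. -/
def FCP1 {N M K : ℕ} (d : Fin N → Fin M → ℝ) (D : Fin (K + 1) → ℝ) (p : ℕ) :
    Set ((Fin M → ℝ) × (Fin K → ℝ)) :=
  { yz | (∀ j, 0 ≤ yz.1 j ∧ yz.1 j ≤ 1) ∧ (∀ k, 0 ≤ yz.2 k ∧ yz.2 k ≤ 1) ∧
    1 ≤ ∑ j, yz.1 j ∧ ∑ j, yz.1 j ≤ (p : ℝ) ∧ Ordered yz.2 ∧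
    ∀ i : Fin N, ∀ k : Fin K, ActiveIdx d D i k →
      1 ≤ yz.2 k + ∑ j ∈ univ.filter (fun j => d i j < D k.succ), yz.1 j }

/-- Integer feasible solutions of formulation `(CP1)`. -/
def CP1Int {N M K : ℕ} (d : Fin N → Fin M → ℝ) (D : Fin (K + 1) → ℝ) (p : ℕ) :
    Set ((Fin M → ℝ) × (Fin K → ℝ)) :=
  { yz | (∀ j, yz.1 j = 0 ∨ yz.1 j = 1) ∧ (∀ k, yz.2 k = 0 ∨ yz.2 k = 1) ∧
    1 ≤ ∑ j, yz.1 j ∧ ∑ j, yz.1 j ≤ (p : ℝ) ∧ Ordered yz.2 ∧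
    ∀ i : Fin N, ∀ k : Fin K, ActiveIdx d D i k →
      1 ≤ yz.2 k + ∑ j ∈ univ.filter (fun j => d i j < D k.succ), yz.1 j }

/-- LP-relaxed feasible set of formulation `(CP2)`. -/
def FCP2 {N M K : ℕ} (d : Fin N → Fin M → ℝ) (D : Fin (K + 1) → ℝ) (p : ℕ) :
    Set ((Fin M → ℝ) × ℝ) :=
  { yr | (∀ j, 0 ≤ yr.1 j ∧ yr.1 j ≤ 1) ∧ 0 ≤ yr.2 ∧ yr.2 ≤ (K : ℝ) ∧
    1 ≤ ∑ j, yr.1 j ∧ ∑ j, yr.1 j ≤ (p : ℝ) ∧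
    ∀ i : Fin N, ∀ k : Fin K, ActiveIdx d D i k →
      ((k : ℕ) + 1 : ℝ) ≤ yr.2 +
        ((k : ℕ) + 1 : ℝ) * ∑ j ∈ univ.filter (fun j => d i j < D k.succ), yr.1 j }

/-- Integer feasible solutions of formulation `(CP2)`. -/
def CP2Int {N M K : ℕ} (d : Fin N → Fin M → ℝ) (D : Fin (K + 1) → ℝ) (p : ℕ)
    (y : Fin M → ℝ) (r : ℤ) : Prop :=
  (∀ j, y j = 0 ∨ y j = 1) ∧ 0 ≤ r ∧ r ≤ (K : ℤ) ∧
    1 ≤ ∑ j, y j ∧ ∑ j, y j ≤ (p : ℝ) ∧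
    ∀ i : Fin N, ∀ k : Fin K, ActiveIdx d D i k →
      ((k : ℕ) + 1 : ℝ) ≤ (r : ℝ) +
        ((k : ℕ) + 1 : ℝ) * ∑ j ∈ univ.filter (fun j => d i j < D k.succ), y j

/-- every optimal solution of the LP relaxation of `(P2)` automatically
satisfies the ordering constraints `z^k ≥ z^{k+1}`. -/
theorem stmt0 {N M K : ℕ} (hN : 0 < N) (hM : 0 < M)
    (d : Fin N → Fin M → ℝ) (p : ℕ) (hp1 : 1 ≤ p) (hpM : p ≤ M)
    (D : Fin (K + 1) → ℝ) (hD : StrictMono D)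
    (hrange : Set.range D = { x : ℝ | ∃ i j, d i j = x })
    (y : Fin M → ℝ) (z : Fin K → ℝ)
    (hfeas : (y, z) ∈ FP2 d D p)
    (hopt : obj D z = sInf { v | ∃ yz ∈ FP2 d D p, v = obj D yz.2 }) :
    Ordered z := by
  intro k h
  by_contra hlt
  push_neg at hlt
  set k' : Fin K := ⟨(k : ℕ) + 1, h⟩ with hk'
  set z' := Function.update z k' (z k) with hz'
  obtain ⟨hy, hz, hs1, hsp, hcons⟩ := hfeas
  have hDk : D k.succ < D k'.succ := by
    apply hD
    show (k:ℕ) + 1 < (k:ℕ) + 1 + 1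
    omega
  have hfeas' : (y, z') ∈ FP2 d D p := by
    refine ⟨hy, ?_, hs1, hsp, ?_⟩
    · intro m
      by_cases hm : m = k'
      · subst hm; simp [hz', Function.update_self]; exact hz k
      · simp [hz', Function.update_of_ne hm]; exact hz m
    · intro i m
      by_cases hm : m = k'
      · subst hm
        have h1 := hcons i k
        have hsub : (univ.filter (fun j => d i j < D k.succ)) ⊆
            (univ.filter (fun j => d i j < D k'.succ)) := by
          intro j hj
          simp only [mem_filter, mem_univ, true_and] at hj ⊢
          exact hj.trans hDk
        have hsum : ∑ j ∈ univ.filter (fun j => d i j < D k.succ), y j ≤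
            ∑ j ∈ univ.filter (fun j => d i j < D k'.succ), y j :=
          Finset.sum_le_sum_of_subset_of_nonneg hsub (fun j _ _ => (hy j).1)
        simp only [hz', Function.update_self]
        linarith
      · simp only [hz', Function.update_of_ne hm]; exact hcons i m
  have hc : 0 < D k'.succ - D k'.castSucc := by
    have := hD (Fin.castSucc_lt_succ : k'.castSucc < k'.succ)
    linarith
  have key : ∑ m : Fin K, ((D m.succ - D m.castSucc) * z' m
      - (D m.succ - D m.castSucc) * z m)
      = (D k'.succ - D k'.castSucc) * (z k - z k') := by
    rw [Finset.sum_eq_single k']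
    · simp [hz', Function.update_self]; ring
    · intro b _ hb; simp [hz', Function.update_of_ne hb]
    · simp
  have hobj : obj D z' < obj D z := by
    unfold obj
    have hdiff : ∑ m : Fin K, (D m.succ - D m.castSucc) * z' m
        - ∑ m : Fin K, (D m.succ - D m.castSucc) * z m
        = (D k'.succ - D k'.castSucc) * (z k - z k') := by
      rw [← Finset.sum_sub_distrib]; exact key
    have : (D k'.succ - D k'.castSucc) * (z k - z k') < 0 :=
      mul_neg_of_pos_of_neg hc (by linarith)
    linarith
  have hmem : obj D z' ∈ { v | ∃ yz ∈ FP2 d D p, v = obj D yz.2 } :=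
    ⟨(y, z'), hfeas', rfl⟩
  have hbdd : BddBelow { v | ∃ yz ∈ FP2 d D p, v = obj D yz.2 } := by
    refine ⟨D 0, ?_⟩
    rintro v ⟨yz, hyz, rfl⟩
    have hzz := hyz.2.1
    have : 0 ≤ ∑ m : Fin K, (D m.succ - D m.castSucc) * yz.2 m := by
      apply Finset.sum_nonneg
      intro m _
      have := hD (Fin.castSucc_lt_succ : m.castSucc < m.succ)
      exact mul_nonneg (by linarith) (hzz m).1
    unfold obj; linarith
  have := csInf_le hbdd hmem
  rw [← hopt] at this
  linarith
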